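/- Let k ≥ 2 be an integer. Then for every positive integer i, every k-breakable class of graphs is (2^{i+1}(k−1), 0, 1/2^i)-breakable, where 0 denotes the constant zero function. -/

import Mathlib

open scoped BigOperators
open SimpleGraph

attribute [local instance] Classical.propDecidable

namespace ArxivFormal

/-- The closed neighborhood `N[X]` of a set of vertices `X`. -/
def closedNbhd {V : Type} (G : SimpleGraph V) (X : Set V) : Set V :=
  X ∪ {v | ∃ x ∈ X, G.Adj x v}

/-- The open neighborhood of the set `X` inside the ambient vertex set `A`
(i.e. computed in the induced subgraph `G[A]`). -/
def openNbhdIn {V : Type} (G : SimpleGraph V) (A X : Set V) : Set V :=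
  {v | v ∈ A ∧ v ∉ X ∧ ∃ x ∈ X, G.Adj x v}

/-- Two (disjoint) vertex sets are anticomplete if there are no edges between them. -/
def Anticomplete {V : Type} (G : SimpleGraph V) (X Y : Set V) : Prop :=
  Disjoint X Y ∧ ∀ x ∈ X, ∀ y ∈ Y, ¬ G.Adj x y

/-- `alphaOn G S` is the stability (independence) number of `G[S]`. -/
noncomputable def alphaOn {V : Type} [Fintype V] (G : SimpleGraph V) (S : Set V) : ℕ :=
  sSup {n | ∃ I : Finset V, ↑I ⊆ S ∧ (∀ u ∈ I, ∀ v ∈ I, ¬ G.Adj u v) ∧ I.card = n}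

/-- The weight `w(S)` of a set of vertices. -/
noncomputable def setWeight {V : Type} [Fintype V] (w : V → ℝ) (S : Set V) : ℝ :=
  ∑ v ∈ Finset.univ.filter (fun v => v ∈ S), w v

/-- A weight function takes values in `[0,1]` and has total weight at most `1`. -/
def IsWeightFunction {V : Type} [Fintype V] (w : V → ℝ) : Prop :=
  (∀ v, 0 ≤ w v ∧ w v ≤ 1) ∧ ∑ v, w v ≤ 1

/-- A normal weight function has total weight exactly `1`. -/
def IsNormalWeightFunction {V : Type} [Fintype V] (w : V → ℝ) : Prop :=
  (∀ v, 0 ≤ w v ∧ w v ≤ 1) ∧ ∑ v, w v = 1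

/-- The vertex set (as a subset of the ambient vertex set) of the connected component `c`
of the induced subgraph `G[A]`. -/
def componentSet {V : Type} (G : SimpleGraph V) (A : Set V)
    (c : (G.induce A).ConnectedComponent) : Set V :=
  {v | ∃ h : v ∈ A, (G.induce A).connectedComponentMk ⟨v, h⟩ = c}

/-- `X` is a `(w,c)`-balanced separator of the induced subgraph `G[B]`:
every component of `G[B] ∖ X` has weight at most `c`. -/
def IsSepWithin {V : Type} [Fintype V] (G : SimpleGraph V) (w : V → ℝ) (c : ℝ)
    (B X : Set V) : Prop :=
  ∀ comp : (G.induce (B \ X)).ConnectedComponent,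
    setWeight w (componentSet G (B \ X) comp) ≤ c

/-- `X` is a `(w,c)`-balanced separator of `G`. -/
def IsBalancedSeparator {V : Type} [Fintype V] (G : SimpleGraph V) (w : V → ℝ)
    (c : ℝ) (X : Set V) : Prop :=
  IsSepWithin G w c Set.univ X

/-- `G` contains no induced copy of `H`. -/
def IndFree {V W : Type} (G : SimpleGraph V) (H : SimpleGraph W) : Prop :=
  IsEmpty (H ↪g G)

/-- The graph `S_{t,t,t}`: the claw `K_{1,3}` with every edge subdivided `t-1` times,
i.e. three paths with `t` edges each, glued at a common center. -/
def subClaw (t : ℕ) : SimpleGraph (Unit ⊕ Fin 3 × Fin t) :=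
  SimpleGraph.fromRel fun a b =>
    match a, b with
    | Sum.inl _, Sum.inr p => (p.2 : ℕ) = 0
    | Sum.inr p, Sum.inr q => p.1 = q.1 ∧ (p.2 : ℕ) + 1 = (q.2 : ℕ)
    | _, _ => False

/-- The complete bipartite graph `K_{t,t}`. -/
def Ktt (t : ℕ) : SimpleGraph (Fin t ⊕ Fin t) := completeBipartiteGraph (Fin t) (Fin t)

/-- The `t`-by-`t` hexagonal grid (wall): a brick-wall graph with horizontal paths joined by
vertical edges whose positions alternate between consecutive rows. -/
def wall (t : ℕ) : SimpleGraph (Fin (t + 1) × Fin (2 * t + 2)) :=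
  SimpleGraph.fromRel fun a b =>
    (a.1 = b.1 ∧ (a.2 : ℕ) + 1 = (b.2 : ℕ)) ∨
    ((a.1 : ℕ) + 1 = (b.1 : ℕ) ∧ a.2 = b.2 ∧ ((a.1 : ℕ) + (a.2 : ℕ)) % 2 = 0)

/-- The graph obtained from `W` by subdividing the edge `uv` once (the new vertex is `none`). -/
def subdivideEdge {β : Type} (W : SimpleGraph β) (u v : β) : SimpleGraph (Option β) :=
  SimpleGraph.fromRel fun a b =>
    (∃ x y : β, a = some x ∧ b = some y ∧ W.Adj x y ∧ s(x, y) ≠ s(u, v)) ∨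
    (a = none ∧ (b = some u ∨ b = some v))

/-- `IsSubdivisionOf G W` : `G` is (isomorphic to) a graph obtained from `W` by
repeatedly subdividing edges. -/
inductive IsSubdivisionOf : {α : Type} → {β : Type} → SimpleGraph α → SimpleGraph β → Prop
  | of_iso {α β : Type} {G : SimpleGraph α} {W : SimpleGraph β} :
      (G ≃g W) → IsSubdivisionOf G W
  | step {α β : Type} {G : SimpleGraph α} {W : SimpleGraph β} {u v : β} :
      W.Adj u v → IsSubdivisionOf G (subdivideEdge W u v) → IsSubdivisionOf G W

/-- `G` contains no induced copy of the line graph of any subdivision of the `t×t` wall,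
i.e. `G` is `𝓛_t`-free. -/
def LFree (t : ℕ) {V : Type} (G : SimpleGraph V) : Prop :=
  ∀ (β : Type) (H : SimpleGraph β), IsSubdivisionOf H (wall t) → IndFree G (lineGraph H)

/-- Membership in `𝓜_t`: `G` is `(𝓛_t ∪ {S_{t,t,t}, K_{t,t}})`-free. -/
def InM (t : ℕ) {V : Type} (G : SimpleGraph V) : Prop :=
  LFree t G ∧ IndFree G (subClaw t) ∧ IndFree G (Ktt t)

/-- Membership in `𝓜_t*`: `G` is `(𝓛_t ∪ {S_{t,t,t}})`-free. -/
def InMstar (t : ℕ) {V : Type} (G : SimpleGraph V) : Prop :=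
  LFree t G ∧ IndFree G (subClaw t)

/-- A tree decomposition of `G`. -/
structure TreeDecomp {V : Type} (G : SimpleGraph V) where
  ι : Type
  tree : SimpleGraph ι
  isTree : tree.IsTree
  bag : ι → Set V
  mem_bag : ∀ v : V, ∃ i, v ∈ bag i
  edge_bag : ∀ ⦃u v : V⦄, G.Adj u v → ∃ i, u ∈ bag i ∧ v ∈ bag i
  bag_connected : ∀ v : V, (tree.induce {i | v ∈ bag i}).Connected

/-- An extended strip decomposition of `(G, Z)` with pattern `H`. -/
structure ESD {α β : Type} (G : SimpleGraph α) (Z : Set α) (H : SimpleGraph β) where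
  vMap : β → Set α
  eMap : H.edgeSet → Set α
  tMap : {T : Finset β // H.IsNClique 3 T} → Set α
  evMap : H.edgeSet → β → Set α
  evMap_eq_empty : ∀ (e : H.edgeSet) (v : β), v ∉ (e : Sym2 β) → evMap e v = ∅
  evMap_subset : ∀ (e : H.edgeSet) (v : β), evMap e v ⊆ eMap e
  covers : ∀ x : α, (∃ v, x ∈ vMap v) ∨ (∃ e, x ∈ eMap e) ∨ (∃ T, x ∈ tMap T)
  disj_vv : ∀ v v', v ≠ v' → Disjoint (vMap v) (vMap v')
  disj_ee : ∀ e e', e ≠ e' → Disjoint (eMap e) (eMap e')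
  disj_tt : ∀ T T', T ≠ T' → Disjoint (tMap T) (tMap T')
  disj_ve : ∀ v e, Disjoint (vMap v) (eMap e)
  disj_vt : ∀ v T, Disjoint (vMap v) (tMap T)
  disj_et : ∀ e T, Disjoint (eMap e) (tMap T)
  adj_iff : ∀ (e f : H.edgeSet), e ≠ f → ∀ x ∈ eMap e, ∀ y ∈ eMap f,
    (G.Adj x y ↔ ∃ v : β, v ∈ (e : Sym2 β) ∧ v ∈ (f : Sym2 β) ∧
      x ∈ evMap e v ∧ y ∈ evMap f v)
  vertex_bd : ∀ (v : β) (x y : α), x ∈ vMap v → y ∉ vMap v → G.Adj x y →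
    ∃ e : H.edgeSet, v ∈ (e : Sym2 β) ∧ y ∈ evMap e v
  triangle_bd : ∀ (T : {T : Finset β // H.IsNClique 3 T}) (x y : α),
    x ∈ tMap T → y ∉ tMap T → G.Adj x y →
    ∃ u v : β, u ≠ v ∧ u ∈ T.1 ∧ v ∈ T.1 ∧
      ∃ e : H.edgeSet, (e : Sym2 β) = s(u, v) ∧ y ∈ evMap e u ∧ y ∈ evMap e v
  leaves_equiv : Nonempty (Z ≃ {w : β // ∃! u, H.Adj w u})
  leaves_map : ∀ z ∈ Z, ∃ w : β, (∃! u, H.Adj w u) ∧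
    ∀ e : H.edgeSet, w ∈ (e : Sym2 β) → evMap e w = {z}

namespace ESD

variable {α β : Type} {G : SimpleGraph α} {Z : Set α} {H : SimpleGraph β}

/-- `η` is faithful: for every edge `uv` of `H` there is an `e`-rung,
an induced path inside `η(e)` from `η(e,v)` to `η(e,u)` whose internal vertices avoid
`η(e,u) ∪ η(e,v)`. -/
def IsFaithful (η : ESD G Z H) : Prop :=
  ∀ (u v : β) (h : H.Adj u v), ∃ (k : ℕ) (hk : 0 < k) (p : Fin k → α),
    Function.Injective p ∧
    (∀ i j : Fin k, (i : ℕ) < (j : ℕ) → (G.Adj (p i) (p j) ↔ (j : ℕ) = (i : ℕ) + 1)) ∧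
    (∀ i, p i ∈ η.eMap ⟨s(u, v), H.mem_edgeSet.mpr h⟩) ∧
    p ⟨0, hk⟩ ∈ η.evMap ⟨s(u, v), H.mem_edgeSet.mpr h⟩ v ∧
    p ⟨k - 1, Nat.sub_lt hk Nat.one_pos⟩ ∈ η.evMap ⟨s(u, v), H.mem_edgeSet.mpr h⟩ u ∧
    ∀ i : Fin k, (i : ℕ) ≠ 0 → (i : ℕ) ≠ k - 1 →
      p i ∉ η.evMap ⟨s(u, v), H.mem_edgeSet.mpr h⟩ u ∧
      p i ∉ η.evMap ⟨s(u, v), H.mem_edgeSet.mpr h⟩ v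

/-- `η.IsAtomBd A Δ` : `A` is an atom of `η` with boundary `Δ`. -/
def IsAtomBd (η : ESD G Z H) (A Δ : Set α) : Prop :=
  (∃ v : β, A = η.vMap v ∧
    Δ = {x | ∃ e : H.edgeSet, v ∈ (e : Sym2 β) ∧ x ∈ η.evMap e v}) ∨
  (∃ T, A = η.tMap T ∧
    Δ = {x | ∃ u v : β, u ≠ v ∧ u ∈ T.1 ∧ v ∈ T.1 ∧
      ∃ e : H.edgeSet, (e : Sym2 β) = s(u, v) ∧ x ∈ η.evMap e u ∧ x ∈ η.evMap e v}) ∨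
  (∃ (u v : β) (h : H.Adj u v),
    A = η.eMap ⟨s(u, v), H.mem_edgeSet.mpr h⟩ \
        (η.evMap ⟨s(u, v), H.mem_edgeSet.mpr h⟩ u ∪ η.evMap ⟨s(u, v), H.mem_edgeSet.mpr h⟩ v) ∧
    Δ = η.evMap ⟨s(u, v), H.mem_edgeSet.mpr h⟩ u ∪ η.evMap ⟨s(u, v), H.mem_edgeSet.mpr h⟩ v)

/-- `A` is an atom of `η`. -/
def IsAtom (η : ESD G Z H) (A : Set α) : Prop := ∃ Δ, η.IsAtomBd A Δ

end ESD
/-- A class of (finite) graphs. -/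
def GraphClass : Type 1 := ∀ (V : Type) [Fintype V], SimpleGraph V → Prop

/-- The class `𝓒` is closed under taking induced subgraphs. -/
def GraphClass.ClosedUnderInduced (𝓒 : GraphClass) : Prop :=
  ∀ (V : Type) [Fintype V] (G : SimpleGraph V) (S : Set V) [Fintype S],
    𝓒 V G → 𝓒 S (G.induce S)

/-- `G` is `k`-breakable: for every weight function there is a `w`-balanced separator
with a core of size strictly less than `k`. -/
def KBreakableGraph {V : Type} [Fintype V] (G : SimpleGraph V) (k : ℕ) : Prop :=
  ∀ w : V → ℝ, IsWeightFunction w → ∃ (Y : Set V) (X : Finset V),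
    X.card < k ∧ Y ⊆ closedNbhd G ↑X ∧ IsBalancedSeparator G w (1 / 2) Y

/-- A `k`-breakable class of graphs. -/
def GraphClass.KBreakable (𝓒 : GraphClass) (k : ℕ) : Prop :=
  𝓒.ClosedUnderInduced ∧
  ∀ (V : Type) [Fintype V] (G : SimpleGraph V), 𝓒 V G → KBreakableGraph G k

/-- `(S, C)` is a `(w, ε)`-boosted separator of `G`: for a maximum-weight component `B`
of `G ∖ C`, either `w(B) ≤ 1/2` or `S ∩ B` is a `(w, ε)`-balanced separator of `G[B]`. -/
def IsBoostedSeparator {V : Type} [Fintype V] (G : SimpleGraph V) (w : V → ℝ) (ε : ℝ)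
    (S C : Set V) : Prop :=
  ∀ b : (G.induce Cᶜ).ConnectedComponent,
    (∀ b', setWeight w (componentSet G Cᶜ b') ≤ setWeight w (componentSet G Cᶜ b)) →
    (setWeight w (componentSet G Cᶜ b) ≤ 1 / 2 ∨
      IsSepWithin G w ε (componentSet G Cᶜ b) (S ∩ componentSet G Cᶜ b))

/-- `G` is `(k, f, ε)`-breakable. -/
def KFEBreakableGraph {V : Type} [Fintype V] (G : SimpleGraph V) (k : ℕ) (f : ℕ → ℝ)
    (ε : ℝ) : Prop :=
  ∀ w : V → ℝ, IsWeightFunction w → ∃ (S C : Set V) (X : Finset V),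
    X.card ≤ k ∧ S ⊆ closedNbhd G ↑X ∧ IsBoostedSeparator G w ε S C ∧
    (alphaOn G C : ℝ) ≤ f (Fintype.card V)

/-- A `(k, f, ε)`-breakable class of graphs. -/
def GraphClass.KFEBreakable (𝓒 : GraphClass) (k : ℕ) (f : ℕ → ℝ) (ε : ℝ) : Prop :=
  𝓒.ClosedUnderInduced ∧
  ∀ (V : Type) [Fintype V] (G : SimpleGraph V), 𝓒 V G → KFEBreakableGraph G k f ε

section Problematic

variable {V : Type} [Fintype V]

/-- For a vertex `x` and a component `b` of `G[A] ∖ N[X]`, the quantity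
`α(N(x) ∩ N(B))`, all computed in the graph `G[A]`. -/
noncomputable def probAlpha (G : SimpleGraph V) (A : Set V) (X : Finset V) (x : V)
    (b : (G.induce (A \ closedNbhd G ↑X)).ConnectedComponent) : ℕ :=
  alphaOn G (G.neighborSet x ∩
    openNbhdIn G A (componentSet G (A \ closedNbhd G ↑X) b))

/-- `β(G[A], X)`: the largest `β` for which an `(X, β)`-problematic pair exists in `G[A]`
(and `0` if there is none). -/
noncomputable def maxBetaIn (G : SimpleGraph V) (w : V → ℝ) (ε : ℝ) (A : Set V)
    (X : Finset V) : ℕ :=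
  Finset.sup Finset.univ
    (fun p : V × (G.induce (A \ closedNbhd G ↑X)).ConnectedComponent =>
      if p.1 ∈ X ∧ ε < setWeight w (componentSet G (A \ closedNbhd G ↑X) p.2)
      then probAlpha G A X p.1 p.2 else 0)

/-- `W(G[A], X, β)`: the total weight of big components appearing in `(X, 3β/4)`-problematic
pairs of `G[A]`. -/
noncomputable def probWeightIn (G : SimpleGraph V) (w : V → ℝ) (ε : ℝ) (A : Set V)
    (X : Finset V) (β : ℝ) : ℝ :=
  ∑ x ∈ X, ∑ b : (G.induce (A \ closedNbhd G ↑X)).ConnectedComponent,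
    if ε < setWeight w (componentSet G (A \ closedNbhd G ↑X) b) ∧
       3 * β / 4 ≤ (probAlpha G A X x b : ℝ)
    then setWeight w (componentSet G (A \ closedNbhd G ↑X) b) else 0

end Problematic

/-- The `2`-subdivision of a graph: every edge is replaced by a three-edge path. The two
internal vertices of the path replacing an edge are the two darts of that edge. -/
def twoSubdivision {V : Type} (H : SimpleGraph V) : SimpleGraph (V ⊕ H.Dart) :=
  SimpleGraph.fromRel fun a b =>
    match a, b with
    | Sum.inl u, Sum.inr d => d.toProd.1 = u
    | Sum.inr d, Sum.inr d' => d' = d.symm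
    | _, _ => False

/-- `K_γ^{(2)}`, the `2`-subdivision of the complete graph on `γ` vertices. -/
def Kgamma2 (γ : ℕ) : SimpleGraph (Fin γ ⊕ (⊤ : SimpleGraph (Fin γ)).Dart) :=
  twoSubdivision (⊤ : SimpleGraph (Fin γ))

/-- `(A, B)` forms a `K_{s,t}` in `G` with respect to `Y`. -/
def IsKstWrt {V : Type} (G : SimpleGraph V) (s t : ℕ) (Y : Set V)
    (A B : Finset V) : Prop :=
  A.card = s ∧ B.card = t ∧ Disjoint A B ∧ ↑B ⊆ Y ∧
  (∀ u ∈ A, ∀ v ∈ A, ¬ G.Adj u v) ∧ (∀ u ∈ B, ∀ v ∈ B, ¬ G.Adj u v) ∧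
  (∀ u ∈ A, ∀ v ∈ B, G.Adj u v)

/-- `G` is `K_{s,t}`-free with respect to `Y`. -/
def KstFreeWrt {V : Type} (G : SimpleGraph V) (s t : ℕ) (Y : Set V) : Prop :=
  ¬ ∃ A B : Finset V, IsKstWrt G s t Y A B

/-- `p` enumerates the vertices of an induced path in `G`. -/
def IsPathSeq {V : Type} (G : SimpleGraph V) (k : ℕ) (p : Fin k → V) : Prop :=
  Function.Injective p ∧
  ∀ i j : Fin k, (i : ℕ) < (j : ℕ) → (G.Adj (p i) (p j) ↔ (j : ℕ) = (i : ℕ) + 1)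

/-- `G` is a path. -/
def IsPathGraph {V : Type} (G : SimpleGraph V) : Prop :=
  ∃ n : ℕ, Nonempty (G ≃g SimpleGraph.pathGraph n)

/-- `G` is a caterpillar: a tree with maximum degree at most three in which some path
contains all vertices of degree three. -/
def IsCaterpillar {V : Type} (G : SimpleGraph V) : Prop :=
  G.IsTree ∧ (∀ v, (G.neighborSet v).ncard ≤ 3) ∧
  ∃ (k : ℕ) (p : Fin k → V), IsPathSeq G k p ∧
    ∀ v : V, (G.neighborSet v).ncard = 3 → ∃ i, p i = v

/-- `G` is a subdivided star. -/
def IsSubdividedStar {V : Type} (G : SimpleGraph V) : Prop :=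
  ∃ m : ℕ, IsSubdivisionOf G (completeBipartiteGraph Unit (Fin m))

/-- `G` is the line graph of a caterpillar. -/
def IsLineGraphOfCaterpillar {V : Type} (G : SimpleGraph V) : Prop :=
  ∃ (β : Type) (T : SimpleGraph β), Finite β ∧ IsCaterpillar T ∧ Nonempty (G ≃g lineGraph T)

/-- `G` is the line graph of a subdivided star. -/
def IsLineGraphOfSubdividedStar {V : Type} (G : SimpleGraph V) : Prop :=
  ∃ (β : Type) (T : SimpleGraph β), Finite β ∧ IsSubdividedStar T ∧
    Nonempty (G ≃g lineGraph T)

/-- The set `𝒵(G)` of vertices whose neighborhood is a clique. -/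
def cliqueVerts {V : Type} (G : SimpleGraph V) : Set V :=
  {v | (G.neighborSet v).Pairwise G.Adj}

/-- Membership in `𝒮`: a forest every component of which has at most three leaves. -/
def InS {V : Type} (T : SimpleGraph V) : Prop :=
  T.IsAcyclic ∧ ∀ c : T.ConnectedComponent,
    {v | T.connectedComponentMk v = c ∧ (T.neighborSet v).ncard = 1}.ncard ≤ 3

/-- The vertex set of a connected component of `G`. -/
def ccSet {V : Type} (G : SimpleGraph V) (c : G.ConnectedComponent) : Set V :=
  {v | G.connectedComponentMk v = c}

section Stmt11Aux

variable {V : Type} [Fintype V] {G : SimpleGraph V}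

lemma setWeight_nonneg (w : V → ℝ) (hw : ∀ v, 0 ≤ w v) (S : Set V) : 0 ≤ setWeight w S :=
  Finset.sum_nonneg fun v _ => hw v

lemma setWeight_mono (w : V → ℝ) (hw : ∀ v, 0 ≤ w v) {S T : Set V} (h : S ⊆ T) :
    setWeight w S ≤ setWeight w T := by
  apply Finset.sum_le_sum_of_subset_of_nonneg
  · intro v hv
    simp only [Finset.mem_filter, Finset.mem_univ, true_and] at hv ⊢
    exact h hv
  · exact fun v _ _ => hw v

lemma setWeight_div (w : V → ℝ) (t : ℝ) (S : Set V) :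
    setWeight (fun v => w v / t) S = setWeight w S / t := by
  simp [setWeight, Finset.sum_div]

lemma single_le_setWeight (w : V → ℝ) (hw : ∀ v, 0 ≤ w v) {S : Set V} {v : V} (hv : v ∈ S) :
    w v ≤ setWeight w S :=
  Finset.single_le_sum (f := w) (fun u _ => hw u) (by simp [hv])

lemma setWeight_image_val {A : Set V} (w : V → ℝ) (S : Set ↥A) :
    setWeight (fun x : ↥A => w ↑x) S = setWeight w (Subtype.val '' S) := by
  unfold setWeight
  have himg : (Finset.univ.filter (fun x : ↥A => x ∈ S)).image Subtype.val
      = Finset.univ.filter (fun v => v ∈ Subtype.val '' S) := by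
    ext v
    simp only [Finset.mem_image, Finset.mem_filter, Finset.mem_univ, true_and, Set.mem_image]
  rw [← himg, Finset.sum_image (fun x _ y _ h => Subtype.val_injective h)]

lemma setWeight_univ (w : V → ℝ) : setWeight w Set.univ = ∑ v, w v := by
  simp [setWeight]

lemma componentSet_subset (A : Set V) (c : (G.induce A).ConnectedComponent) :
    componentSet G A c ⊆ A := by
  intro v hv; obtain ⟨h, _⟩ := hv; exact h

lemma sum_setWeight_components_le (w : V → ℝ) (hw0 : ∀ v, 0 ≤ w v) (A : Set V)
    (HC : Finset ((G.induce A).ConnectedComponent)) :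
    ∑ c ∈ HC, setWeight w (componentSet G A c) ≤ setWeight w A := by
  classical
  unfold setWeight
  rw [← Finset.sum_biUnion (by
    intro c hc c' hc' hne
    refine Finset.disjoint_left.mpr ?_
    intro v hv hv'
    simp only [Finset.mem_filter, Finset.mem_univ, true_and] at hv hv'
    obtain ⟨h1, hm1⟩ := hv
    obtain ⟨h2, hm2⟩ := hv'
    exact hne (by rw [← hm1, ← hm2]))]
  apply Finset.sum_le_sum_of_subset_of_nonneg
  · intro v hv
    simp only [Finset.mem_biUnion, Finset.mem_filter, Finset.mem_univ, true_and] at *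
    obtain ⟨c, _, hvc⟩ := hv
    exact componentSet_subset A c hvc
  · exact fun v _ _ => hw0 v

/-- Inclusion homomorphism between induced subgraphs. -/
def inducedHom (G : SimpleGraph V) {S T : Set V} (h : S ⊆ T) : G.induce S →g G.induce T :=
  ⟨fun x => ⟨x.1, h x.2⟩, fun {a b} hab => hab⟩

lemma reach_mono {S T : Set V} (hST : S ⊆ T) {u v : V} (hu : u ∈ S) (hv : v ∈ S)
    (h : (G.induce S).Reachable ⟨u, hu⟩ ⟨v, hv⟩) :
    (G.induce T).Reachable ⟨u, hST hu⟩ ⟨v, hST hv⟩ :=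
  h.map (inducedHom G hST)

lemma reach_closed {S T : Set V}
    (hcl : ∀ x y : V, x ∈ T → y ∈ S → G.Adj x y → y ∈ T)
    {a b : ↥S} (h : (G.induce S).Reachable a b) (ha : ↑a ∈ T) :
    ∃ hb : ↑b ∈ T, (G.induce T).Reachable ⟨↑a, ha⟩ ⟨↑b, hb⟩ := by
  obtain ⟨p⟩ := h
  revert ha
  induction p with
  | nil => exact fun ha => ⟨ha, Reachable.refl _⟩
  | @cons x y c hadj q ih =>
    intro ha
    have hxy : G.Adj ↑x ↑y := hadj
    have hy : ↑y ∈ T := hcl ↑x ↑y ha y.2 hxy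
    obtain ⟨hb, hr⟩ := ih hy
    refine ⟨hb, ?_⟩
    have hadj' : (G.induce T).Adj ⟨↑x, ha⟩ ⟨↑y, hy⟩ := hxy
    exact hadj'.reachable.trans hr

lemma closedNbhd_mono {X X' : Set V} (h : X ⊆ X') : closedNbhd G X ⊆ closedNbhd G X' := by
  intro v hv
  rcases hv with hv | ⟨x, hx, ha⟩
  · exact Or.inl (h hv)
  · exact Or.inr ⟨x, h hx, ha⟩

lemma sub_break {k : ℕ} {𝓒 : GraphClass} (h𝓒 : 𝓒.KBreakable k)
    (hG : 𝓒 V G)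
    (A : Set V) (w : V → ℝ) (hw0 : ∀ v, 0 ≤ w v) (hw1 : ∀ v ∈ A, w v ≤ 1)
    (hwA : setWeight w A ≤ 1) :
    ∃ (Y : Set V) (X : Finset V), X.card ≤ k - 1 ∧ Y ⊆ A ∧ Y ⊆ closedNbhd G ↑X ∧
      IsSepWithin G w (1 / 2) A Y := by
  classical
  have hind : 𝓒 ↥A (G.induce A) := h𝓒.1 V G A hG
  have hbrk := h𝓒.2 ↥A (G.induce A) hind
  set w' : ↥A → ℝ := fun x => w ↑x with hw'def
  have hwf : IsWeightFunction w' := by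
    refine ⟨fun v => ⟨hw0 _, hw1 _ v.2⟩, ?_⟩
    have h1 : ∑ v, w' v = setWeight w' (Set.univ : Set ↥A) := (setWeight_univ w').symm
    rw [h1, hw'def, setWeight_image_val w Set.univ, Subtype.coe_image_univ]
    exact hwA
  obtain ⟨Y', X', hcard, hY'core, hY'sep⟩ := hbrk w' hwf
  refine ⟨Subtype.val '' Y', X'.image Subtype.val, ?_, ?_, ?_, ?_⟩
  · have := Finset.card_image_le (f := Subtype.val) (s := X')
    omega
  · rintro y ⟨y', _, rfl⟩; exact y'.2
  · rintro y ⟨y', hy', rfl⟩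
    rcases hY'core hy' with h | ⟨x, hx, hadj⟩
    · exact Or.inl (by
        simp only [Finset.coe_image, Set.mem_image, Finset.mem_coe]
        exact ⟨y', h, rfl⟩)
    · refine Or.inr ⟨↑x, ?_, hadj⟩
      simp only [Finset.coe_image, Set.mem_image, Finset.mem_coe]
      exact ⟨x, hx, rfl⟩
  · intro comp
    obtain ⟨⟨x, hx⟩, hmk⟩ := Quot.exists_rep comp
    have hxA : x ∈ A := hx.1
    have hxY' : (⟨x, hxA⟩ : ↥A) ∈ (Set.univ \ Y' : Set ↥A) :=
      ⟨trivial, fun hmem => hx.2 ⟨_, hmem, rfl⟩⟩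
    set c' := ((G.induce A).induce (Set.univ \ Y')).connectedComponentMk
      ⟨⟨x, hxA⟩, hxY'⟩ with hc'def
    have hsub : componentSet G (A \ Subtype.val '' Y') comp ⊆
        Subtype.val '' (componentSet (G.induce A) (Set.univ \ Y') c') := by
      intro u hu
      obtain ⟨hu', hmku⟩ := hu
      have hr : (G.induce (A \ Subtype.val '' Y')).Reachable ⟨x, hx⟩ ⟨u, hu'⟩ :=
        ConnectedComponent.eq.mp (hmk.trans hmku.symm)
      let f : G.induce (A \ Subtype.val '' Y') →g (G.induce A).induce (Set.univ \ Y') :=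
        ⟨fun z => ⟨⟨z.1, z.2.1⟩, ⟨trivial, fun hz => z.2.2 ⟨_, hz, rfl⟩⟩⟩,
         fun {a b} hab => hab⟩
      have hr2 := hr.map f
      exact ⟨⟨u, hu'.1⟩, ⟨⟨trivial, fun hz => hu'.2 ⟨_, hz, rfl⟩⟩,
        (ConnectedComponent.eq.mpr hr2.symm : _)⟩, rfl⟩
    calc setWeight w (componentSet G (A \ Subtype.val '' Y') comp)
        ≤ setWeight w (Subtype.val '' (componentSet (G.induce A) (Set.univ \ Y') c')) :=
          setWeight_mono w hw0 hsub
      _ = setWeight w' (componentSet (G.induce A) (Set.univ \ Y') c') :=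
          (setWeight_image_val w _).symm
      _ ≤ 1 / 2 := hY'sep c'

lemma claim_break {k : ℕ} (hk : 2 ≤ k) {𝓒 : GraphClass} (h𝓒 : 𝓒.KBreakable k)
    (hG : 𝓒 V G) (w : V → ℝ) (hw0 : ∀ v, 0 ≤ w v) :
    ∀ (i : ℕ) (A : Set V), setWeight w A ≤ 1 →
      ∃ (Y : Set V) (X : Finset V), X.card ≤ 2 ^ (i + 1) * (k - 1) ∧ Y ⊆ A ∧
        Y ⊆ closedNbhd G ↑X ∧ IsSepWithin G w ((1 : ℝ) / 2 ^ i) A Y := by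
  intro i
  induction i with
  | zero =>
    intro A hA
    refine ⟨∅, ∅, by simp, Set.empty_subset _, Set.empty_subset _, ?_⟩
    intro comp
    have hc : componentSet G (A \ ∅) comp ⊆ A := by
      intro v hv
      exact (componentSet_subset _ comp hv).1
    calc setWeight w (componentSet G (A \ ∅) comp) ≤ setWeight w A :=
          setWeight_mono w hw0 hc
      _ ≤ 1 := hA
      _ = 1 / 2 ^ 0 := by norm_num
  | succ i ih =>
    intro A hA
    obtain ⟨Y, X, hXc, hYA, hYcore, hYsep⟩ := ih A hA
    classical
    set ε : ℝ := 1 / 2 ^ (i + 1) with hεdef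
    have hε : (0 : ℝ) < ε := by rw [hεdef]; positivity
    set HC : Finset ((G.induce (A \ Y)).ConnectedComponent) :=
      Finset.univ.filter (fun c => ε < setWeight w (componentSet G (A \ Y) c)) with hHCdef
    have hchoice : ∀ c : (G.induce (A \ Y)).ConnectedComponent,
        ∃ (Yc : Set V) (Xc : Finset V), c ∈ HC →
          Xc.card ≤ k - 1 ∧ Yc ⊆ componentSet G (A \ Y) c ∧
          Yc ⊆ closedNbhd G ↑Xc ∧ IsSepWithin G w ε (componentSet G (A \ Y) c) Yc := by
      intro c
      by_cases hc : c ∈ HC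
      · set D := componentSet G (A \ Y) c with hDdef
        set t := setWeight w D with htdef
        have htpos : 0 < t := lt_trans hε (Finset.mem_filter.mp hc).2
        obtain ⟨Yc, Xc, h1, h2, h3, h4⟩ := sub_break h𝓒 hG D (fun v => w v / t)
          (fun v => div_nonneg (hw0 v) htpos.le)
          (fun v hv => by
            rw [div_le_one htpos]
            exact single_le_setWeight w hw0 hv)
          (by rw [setWeight_div, ← htdef, div_self htpos.ne'])
        refine ⟨Yc, Xc, fun _ => ⟨h1, h2, h3, ?_⟩⟩
        intro comp
        have h5 := h4 comp
        rw [setWeight_div] at h5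
        have h6 : setWeight w (componentSet G (D \ Yc) comp) ≤ t * (1 / 2) :=
          (div_le_iff₀ htpos).mp h5 |>.trans_eq (by ring) |>.trans_eq rfl
        have h7 : t ≤ 1 / 2 ^ i := hYsep c
        rw [hεdef]
        have : (2 : ℝ) ^ (i + 1) = 2 ^ i * 2 := by ring
        rw [this]
        rw [div_le_iff₀ htpos] at h5
        calc setWeight w (componentSet G (D \ Yc) comp) ≤ 1 / 2 * t := by linarith
          _ ≤ 1 / 2 * (1 / 2 ^ i) := by nlinarith
          _ = 1 / (2 ^ i * 2) := by ring
      · exact ⟨∅, ∅, fun h => absurd h hc⟩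
    choose fY fX hf using hchoice
    set Ytot := Y ∪ ⋃ c ∈ HC, fY c with hYtotdef
    set Xtot := X ∪ HC.biUnion fX with hXtotdef
    -- cardinality of HC
    have hm : HC.card ≤ 2 ^ (i + 1) := by
      have h2 : HC.card • ε ≤ ∑ c ∈ HC, setWeight w (componentSet G (A \ Y) c) :=
        Finset.card_nsmul_le_sum HC _ ε (fun c hc => ((Finset.mem_filter.mp hc).2).le)
      have h3 : ∑ c ∈ HC, setWeight w (componentSet G (A \ Y) c) ≤ setWeight w (A \ Y) :=
        sum_setWeight_components_le w hw0 (A \ Y) HC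
      have h4 : setWeight w (A \ Y) ≤ 1 :=
        le_trans (setWeight_mono w hw0 Set.diff_subset) hA
      have h5 : (HC.card : ℝ) * ε ≤ 1 := by
        rw [nsmul_eq_mul] at h2; linarith
      rw [hεdef, mul_one_div, div_le_one (by positivity)] at h5
      have h6 : (HC.card : ℝ) ≤ ((2 ^ (i + 1) : ℕ) : ℝ) := by push_cast; exact h5
      exact_mod_cast h6
    have hcard : Xtot.card ≤ 2 ^ (i + 1 + 1) * (k - 1) := by
      have hb : (HC.biUnion fX).card ≤ ∑ c ∈ HC, (fX c).card := Finset.card_biUnion_le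
      have hs : ∑ c ∈ HC, (fX c).card ≤ HC.card * (k - 1) := by
        calc ∑ c ∈ HC, (fX c).card ≤ ∑ _c ∈ HC, (k - 1) :=
              Finset.sum_le_sum (fun c hc => (hf c hc).1)
          _ = HC.card * (k - 1) := by rw [Finset.sum_const, smul_eq_mul]
      calc Xtot.card ≤ X.card + (HC.biUnion fX).card := Finset.card_union_le _ _
        _ ≤ 2 ^ (i + 1) * (k - 1) + HC.card * (k - 1) := add_le_add hXc (hb.trans hs)
        _ ≤ 2 ^ (i + 1) * (k - 1) + 2 ^ (i + 1) * (k - 1) :=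
            Nat.add_le_add_left (Nat.mul_le_mul_right _ hm) _
        _ = 2 ^ (i + 1 + 1) * (k - 1) := by ring
    have hYtotA : Ytot ⊆ A := by
      intro v hv
      rcases hv with hv | hv
      · exact hYA hv
      · simp only [Set.mem_iUnion] at hv
        obtain ⟨c, hc, hvc⟩ := hv
        exact (componentSet_subset _ c ((hf c hc).2.1 hvc)).1
    have hcore : Ytot ⊆ closedNbhd G ↑Xtot := by
      intro v hv
      rcases hv with hv | hv
      · exact closedNbhd_mono (Finset.coe_subset.mpr Finset.subset_union_left) (hYcore hv)
      · simp only [Set.mem_iUnion] at hv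
        obtain ⟨c, hc, hvc⟩ := hv
        refine closedNbhd_mono ?_ ((hf c hc).2.2.1 hvc)
        exact Finset.coe_subset.mpr
          (le_trans (Finset.subset_biUnion_of_mem fX hc) Finset.subset_union_right)
    refine ⟨Ytot, Xtot, hcard, hYtotA, hcore, ?_⟩
    intro comp
    obtain ⟨⟨v, hv⟩, hmk⟩ := Quot.exists_rep comp
    have hvAY : v ∈ A \ Y := ⟨hv.1, fun h => hv.2 (Or.inl h)⟩
    set c0 := (G.induce (A \ Y)).connectedComponentMk ⟨v, hvAY⟩ with hc0def
    by_cases hc0 : c0 ∈ HC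
    · obtain ⟨hXk, hYcD, hYcc, hsepD⟩ := hf c0 hc0
      set D := componentSet G (A \ Y) c0 with hDdef
      have hvD : v ∈ D := ⟨hvAY, rfl⟩
      have hvT : v ∈ D \ fY c0 :=
        ⟨hvD, fun h => hv.2 (Or.inr (Set.mem_biUnion hc0 h))⟩
      have hsub : componentSet G (A \ Ytot) comp ⊆
          componentSet G (D \ fY c0)
            ((G.induce (D \ fY c0)).connectedComponentMk ⟨v, hvT⟩) := by
        intro u hu
        obtain ⟨hu', hmku⟩ := hu
        have hr : (G.induce (A \ Ytot)).Reachable ⟨v, hv⟩ ⟨u, hu'⟩ :=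
          ConnectedComponent.eq.mp (hmk.trans hmku.symm)
        have hcl : ∀ x y : V, x ∈ D \ fY c0 → y ∈ A \ Ytot → G.Adj x y →
            y ∈ D \ fY c0 := by
          intro x y hx hy hadj
          have hyAY : y ∈ A \ Y := ⟨hy.1, fun h => hy.2 (Or.inl h)⟩
          obtain ⟨hxm, hxmk⟩ := hx.1
          have hadj' : (G.induce (A \ Y)).Adj ⟨x, hxm⟩ ⟨y, hyAY⟩ := hadj
          have hyD : y ∈ D := ⟨hyAY, by
            rw [← hxmk]
            exact ConnectedComponent.eq.mpr hadj'.symm.reachable⟩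
          exact ⟨hyD, fun h => hy.2 (Or.inr (Set.mem_biUnion hc0 h))⟩
        obtain ⟨hbT, hr2⟩ := reach_closed hcl hr hvT
        exact ⟨hbT, ConnectedComponent.eq.mpr hr2.symm⟩
      exact le_trans (setWeight_mono w hw0 hsub) (hsepD _)
    · have hlight : setWeight w (componentSet G (A \ Y) c0) ≤ ε := by
        by_contra hcon
        exact hc0 (Finset.mem_filter.mpr ⟨Finset.mem_univ _, lt_of_not_ge hcon⟩)
      have hsub : componentSet G (A \ Ytot) comp ⊆ componentSet G (A \ Y) c0 := by
        intro u hu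
        obtain ⟨hu', hmku⟩ := hu
        have hr : (G.induce (A \ Ytot)).Reachable ⟨v, hv⟩ ⟨u, hu'⟩ :=
          ConnectedComponent.eq.mp (hmk.trans hmku.symm)
        have hST : A \ Ytot ⊆ A \ Y := fun x hx => ⟨hx.1, fun h => hx.2 (Or.inl h)⟩
        have hr2 := reach_mono hST hv hu' hr
        exact ⟨_, ConnectedComponent.eq.mpr hr2.symm⟩
      exact le_trans (setWeight_mono w hw0 hsub) hlight

lemma alphaOn_empty : alphaOn G (∅ : Set V) = 0 := by
  unfold alphaOn
  have hset : {n | ∃ I : Finset V, ↑I ⊆ (∅ : Set V) ∧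
      (∀ u ∈ I, ∀ v ∈ I, ¬ G.Adj u v) ∧ I.card = n} = {0} := by
    ext n
    simp only [Set.mem_setOf_eq, Set.mem_singleton_iff]
    constructor
    · rintro ⟨I, hI, _, rfl⟩
      have : I = ∅ := Finset.coe_eq_empty.mp (Set.subset_empty_iff.mp hI)
      simp [this]
    · rintro rfl
      exact ⟨∅, by simp⟩
  rw [hset, csSup_singleton]

end Stmt11Aux

/-- every `k`-breakable class is `(2^{i+1}(k-1), 0, 1/2^i)`-breakable. -/
theorem stmt_11 :
    ∀ k : ℕ, 2 ≤ k → ∀ i : ℕ, 0 < i →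
    ∀ 𝓒 : GraphClass, 𝓒.KBreakable k →
      𝓒.KFEBreakable (2 ^ (i + 1) * (k - 1)) (fun _ => 0) ((1 : ℝ) / 2 ^ i) := by
  intro k hk i _hi 𝓒 h𝓒
  refine ⟨h𝓒.1, ?_⟩
  intro V _ G hG w hw
  have hw0 : ∀ v, 0 ≤ w v := fun v => (hw.1 v).1
  obtain ⟨Y, X, hXc, hYA, hYcore, hYsep⟩ :=
    claim_break hk h𝓒 hG w hw0 i Set.univ (by rw [setWeight_univ]; exact hw.2)
  refine ⟨Y, ∅, X, hXc, hYcore, ?_, ?_⟩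
  · intro b _
    right
    set B := componentSet G ((∅ : Set V)ᶜ) b with hBdef
    intro comp
    obtain ⟨⟨u, hu⟩, hmk⟩ := Quot.exists_rep comp
    have hST : B \ (Y ∩ B) ⊆ Set.univ \ Y := by
      intro x hx
      exact ⟨trivial, fun h => hx.2 ⟨h, hx.1⟩⟩
    have hsub : componentSet G (B \ (Y ∩ B)) comp ⊆
        componentSet G (Set.univ \ Y)
          ((G.induce (Set.univ \ Y)).connectedComponentMk ⟨u, hST hu⟩) := by
      intro z hz
      obtain ⟨hz', hmkz⟩ := hz
      have hr : (G.induce (B \ (Y ∩ B))).Reachable ⟨u, hu⟩ ⟨z, hz'⟩ :=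
        ConnectedComponent.eq.mp (hmk.trans hmkz.symm)
      have hr2 := reach_mono hST hu hz' hr
      exact ⟨_, ConnectedComponent.eq.mpr hr2.symm⟩
    exact le_trans (setWeight_mono w hw0 hsub) (hYsep _)
  · rw [alphaOn_empty]
    norm_num

end ArxivFormal
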